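/- Let d ∈ {2,3} and k ≥ 2. For every vector field f with components in 𝒫^{k-2}(ℝ^d) there exist a vector field u with components in 𝒫^k(ℝ^d) satisfying div u = 0 and a scalar p ∈ 𝒫^{k-1}(ℝ^d) such that −Δu + ∇p = f; that is, {−Δu + ∇p : u ∈ [𝒫^k(ℝ^d)]^d with div u = 0, p ∈ 𝒫^{k-1}(ℝ^d)} = [𝒫^{k-2}(ℝ^d)]^d. -/

import Mathlib

open MvPolynomial

/-- The formal Laplacian `Δp = ∑ⱼ ∂ⱼ∂ⱼp` of a polynomial in `d` variables. -/
noncomputable def lap {d : ℕ} (p : MvPolynomial (Fin d) ℝ) : MvPolynomial (Fin d) ℝ :=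
  ∑ j, pderiv j (pderiv j p)

/-- The formal divergence `div v = ∑ᵢ ∂ᵢvᵢ` of a polynomial vector field. -/
noncomputable def pdiv {d : ℕ} (v : Fin d → MvPolynomial (Fin d) ℝ) : MvPolynomial (Fin d) ℝ :=
  ∑ i, pderiv i (v i)

namespace StokesAux

variable {d : ℕ}

abbrev MvP (d : ℕ) := MvPolynomial (Fin d) ℝ

/-- formal antiderivative in variable `i` -/
noncomputable def ad (i : Fin d) : MvP d →ₗ[ℝ] MvP d :=
  (Finsupp.lsum ℝ fun m : Fin d →₀ ℕ =>
    ((m i + 1 : ℝ))⁻¹ • (monomial (m + Finsupp.single i 1) : ℝ →ₗ[ℝ] MvP d))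
    ∘ₗ (AddMonoidAlgebra.coeffLinearEquiv ℝ).toLinearMap

lemma ad_monomial (i : Fin d) (m : Fin d →₀ ℕ) (c : ℝ) :
    ad i (monomial m c) = monomial (m + Finsupp.single i 1) ((m i + 1 : ℝ)⁻¹ * c) := by
  have : (monomial m c : MvP d) = AddMonoidAlgebra.ofCoeff (Finsupp.single m c) :=
    (single_eq_monomial m c).symm
  rw [ad, this]
  simp only [LinearMap.comp_apply, LinearEquiv.coe_coe, AddMonoidAlgebra.coeffLinearEquiv_apply,
    AddMonoidAlgebra.coeff_ofCoeff, Finsupp.lsum_single]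
  simp [smul_monomial]

lemma pderiv_ad (i : Fin d) (p : MvP d) : pderiv i (ad i p) = p := by
  induction p using MvPolynomial.induction_on' with
  | monomial m c =>
    rw [ad_monomial, pderiv_monomial]
    have h1 : (m + Finsupp.single i 1 : Fin d →₀ ℕ) i = m i + 1 := by
      simp [Finsupp.add_apply]
    have h2 : m + Finsupp.single i 1 - Finsupp.single i 1 = m := by
      ext x; simp only [Finsupp.tsub_apply, Finsupp.add_apply, Finsupp.single_apply]
      split_ifs <;> omega
    rw [h1, h2]
    congr 1
    have : (m i + 1 : ℝ) ≠ 0 := by positivity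
    push_cast
    field_simp
  | add p q hp hq => rw [map_add, map_add, hp, hq]


lemma pderiv_ad_comm {i j : Fin d} (h : j ≠ i) (p : MvP d) :
    pderiv j (ad i p) = ad i (pderiv j p) := by
  induction p using MvPolynomial.induction_on' with
  | monomial m c =>
    rw [ad_monomial, pderiv_monomial, pderiv_monomial, ad_monomial]
    have h1 : (m + Finsupp.single i 1 : Fin d →₀ ℕ) j = m j := by
      simp [Finsupp.single_apply, h.symm]
    have h2 : (m - Finsupp.single j 1 : Fin d →₀ ℕ) i = m i := by
      simp [Finsupp.tsub_apply, Finsupp.single_apply, h]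
    have h3 : (m + Finsupp.single i 1 - Finsupp.single j 1 : Fin d →₀ ℕ)
        = m - Finsupp.single j 1 + Finsupp.single i 1 := by
      refine Finsupp.ext fun x => ?_
      simp only [Finsupp.tsub_apply, Finsupp.add_apply, Finsupp.single_apply]
      have hji : ¬ (j = i) := h
      rcases eq_or_ne i x with rfl | hix
      · simp [hji]
      · simp only [if_neg hix]
        split_ifs <;> omega
    rw [h1, h2, h3]
    congr 1
    ring
  | add p q hp hq => simp [map_add, hp, hq]

lemma sum_single_sub (m : Fin d →₀ ℕ) (j : Fin d) (h : 1 ≤ m j) :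
    (m - Finsupp.single j 1).sum (fun _ e => e) + 1 = m.sum (fun _ e => e) := by
  have hle : Finsupp.single j 1 ≤ m := by rwa [Finsupp.single_le_iff]
  conv_rhs => rw [← tsub_add_cancel_of_le hle]
  rw [Finsupp.sum_add_index' (fun _ => rfl) (fun _ _ _ => rfl),
    Finsupp.sum_single_index rfl]

lemma sum_single_add (m : Fin d →₀ ℕ) (j : Fin d) :
    (m + Finsupp.single j 1).sum (fun _ e => e) = m.sum (fun _ e => e) + 1 := by
  rw [Finsupp.sum_add_index' (fun _ => rfl) (fun _ _ _ => rfl),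
    Finsupp.sum_single_index rfl]

lemma totalDegree_pderiv_le (j : Fin d) (p : MvP d) :
    (pderiv j p).totalDegree ≤ p.totalDegree - 1 := by
  conv_lhs => rw [← p.support_sum_monomial_coeff]
  rw [map_sum]
  refine (totalDegree_finset_sum _ _).trans (Finset.sup_le fun m hm => ?_)
  rw [pderiv_monomial]
  rcases Nat.eq_zero_or_pos (m j) with h | h
  · simp [h]
  · refine (totalDegree_monomial_le _ _).trans ?_
    have h0 : ((m - Finsupp.single j 1).sum fun _ ↦ id)
        = ((m - Finsupp.single j 1).sum fun _ e => e) := rfl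
    have h1 := sum_single_sub m j h
    have h2 := le_totalDegree hm
    omega

lemma pderiv_totalDegree_zero {p : MvP d} (h : p.totalDegree = 0) (j : Fin d) :
    pderiv j p = 0 := by
  conv_lhs => rw [← p.support_sum_monomial_coeff]
  rw [map_sum]
  refine Finset.sum_eq_zero fun m hm => ?_
  rw [pderiv_monomial, (totalDegree_eq_zero_iff (Fin d) p).mp h m hm j]
  simp

lemma totalDegree_ad_le (i : Fin d) (p : MvP d) :
    (ad i p).totalDegree ≤ p.totalDegree + 1 := by
  conv_lhs => rw [← p.support_sum_monomial_coeff]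
  rw [map_sum]
  refine (totalDegree_finset_sum _ _).trans (Finset.sup_le fun m hm => ?_)
  rw [ad_monomial]
  refine (totalDegree_monomial_le _ _).trans ?_
  have h0 : ((m + Finsupp.single i 1).sum fun _ ↦ id)
      = ((m + Finsupp.single i 1).sum fun _ e => e) := rfl
  have h1 := sum_single_add m i
  have h2 := le_totalDegree hm
  omega

lemma pderiv_pderiv_comm (a b : Fin d) (p : MvP d) :
    pderiv a (pderiv b p) = pderiv b (pderiv a p) := by
  induction p using MvPolynomial.induction_on' with
  | monomial m c =>
    rcases eq_or_ne a b with rfl | hab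
    · rfl
    · rw [pderiv_monomial, pderiv_monomial, pderiv_monomial, pderiv_monomial]
      have h1 : (m - Finsupp.single b 1 : Fin d →₀ ℕ) a = m a := by
        simp [Finsupp.tsub_apply, Finsupp.single_apply, Ne.symm hab]
      have h2 : (m - Finsupp.single a 1 : Fin d →₀ ℕ) b = m b := by
        simp [Finsupp.tsub_apply, Finsupp.single_apply, hab]
      have h3 : m - Finsupp.single b 1 - Finsupp.single a 1
          = m - Finsupp.single a 1 - Finsupp.single b 1 := tsub_right_comm
      rw [h1, h2, h3]
      congr 1
      ring
  | add p q hp hq => rw [map_add, map_add, hp, hq, map_add, map_add]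


noncomputable def pd (j : Fin d) : Module.End ℝ (MvP d) := (pderiv j).toLinearMap

@[simp] lemma pd_apply (j : Fin d) (p : MvP d) : pd j p = pderiv j p := rfl

noncomputable def lapE (s : Finset (Fin d)) : Module.End ℝ (MvP d) :=
  ∑ j ∈ s, pd j ∘ₗ pd j

lemma lapE_apply (s : Finset (Fin d)) (p : MvP d) :
    lapE s p = ∑ j ∈ s, pderiv j (pderiv j p) := by
  simp [lapE, LinearMap.sum_apply]

noncomputable def Tm (i : Fin d) : Module.End ℝ (MvP d) := (ad i) ∘ₗ (ad i)

lemma Tm_apply (i : Fin d) (p : MvP d) : Tm i p = ad i (ad i p) := rfl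

lemma totalDegree_lapE_le (s : Finset (Fin d)) (p : MvP d) :
    (lapE s p).totalDegree ≤ p.totalDegree - 2 := by
  rw [lapE_apply]
  refine (totalDegree_finset_sum _ _).trans (Finset.sup_le fun j _ => ?_)
  have h1 := totalDegree_pderiv_le j (pderiv j p)
  have h2 := totalDegree_pderiv_le j p
  omega

lemma totalDegree_Tm_le (i : Fin d) (p : MvP d) :
    (Tm i p).totalDegree ≤ p.totalDegree + 2 := by
  rw [Tm_apply]
  have h1 := totalDegree_ad_le i (ad i p)
  have h2 := totalDegree_ad_le i p
  omega

lemma totalDegree_Tm_pow_le (i : Fin d) (j : ℕ) (p : MvP d) :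
    ((Tm i ^ j) p).totalDegree ≤ p.totalDegree + 2 * j := by
  induction j generalizing p with
  | zero => simp
  | succ n ih =>
    rw [pow_succ, Module.End.mul_apply]
    have := ih (Tm i p)
    have := totalDegree_Tm_le i p
    omega

lemma totalDegree_lapE_pow_le (s : Finset (Fin d)) (j : ℕ) (p : MvP d) :
    ((lapE s ^ j) p).totalDegree ≤ p.totalDegree - 2 * j := by
  induction j generalizing p with
  | zero => simp
  | succ n ih =>
    rw [pow_succ, Module.End.mul_apply]
    have := ih (lapE s p)
    have := totalDegree_lapE_le s p
    omega

lemma lapE_nilpotent (s : Finset (Fin d)) :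
    ∀ (n : ℕ) (p : MvP d), p.totalDegree ≤ n → (lapE s ^ (n + 1)) p = 0 := by
  intro n
  induction n with
  | zero =>
    intro p hp
    rw [pow_one, lapE_apply]
    refine Finset.sum_eq_zero fun j _ => ?_
    rw [pderiv_totalDegree_zero (Nat.le_zero.mp hp) j, map_zero]
  | succ n ih =>
    intro p hp
    rw [pow_succ, Module.End.mul_apply]
    exact ih _ (by have := totalDegree_lapE_le s p; omega)

lemma pderiv_lapE (v : Fin d) (s : Finset (Fin d)) (p : MvP d) :
    pderiv v (lapE s p) = lapE s (pderiv v p) := by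
  rw [lapE_apply, lapE_apply, map_sum]
  exact Finset.sum_congr rfl fun j _ => by
    rw [pderiv_pderiv_comm v j, pderiv_pderiv_comm v j]

lemma pderiv_Tm {v i : Fin d} (h : v ≠ i) (p : MvP d) :
    pderiv v (Tm i p) = Tm i (pderiv v p) := by
  rw [Tm_apply, Tm_apply, pderiv_ad_comm h, pderiv_ad_comm h]

lemma lapE_Tm {i : Fin d} {s : Finset (Fin d)} (h : i ∉ s) (p : MvP d) :
    lapE s (Tm i p) = Tm i (lapE s p) := by
  rw [lapE_apply, lapE_apply, map_sum]
  refine Finset.sum_congr rfl fun j hj => ?_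
  have hji : j ≠ i := fun hji => h (hji ▸ hj)
  rw [pderiv_Tm hji, pderiv_Tm hji]

lemma lapE_Tm_pow {i : Fin d} {s : Finset (Fin d)} (h : i ∉ s) (k : ℕ) (p : MvP d) :
    lapE s ((Tm i ^ k) p) = (Tm i ^ k) (lapE s p) := by
  induction k generalizing p with
  | zero => simp
  | succ n ih =>
    rw [pow_succ, Module.End.mul_apply, Module.End.mul_apply, ih (Tm i p), lapE_Tm h]

lemma pderiv_Tm_pow {v i : Fin d} (h : v ≠ i) (k : ℕ) (p : MvP d) :
    pderiv v ((Tm i ^ k) p) = (Tm i ^ k) (pderiv v p) := by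
  induction k generalizing p with
  | zero => simp
  | succ n ih =>
    rw [pow_succ, Module.End.mul_apply, Module.End.mul_apply, ih (Tm i p), pderiv_Tm h]

lemma pderiv_lapE_pow (v : Fin d) (s : Finset (Fin d)) (k : ℕ) (p : MvP d) :
    pderiv v ((lapE s ^ k) p) = (lapE s ^ k) (pderiv v p) := by
  induction k generalizing p with
  | zero => simp
  | succ n ih =>
    rw [pow_succ, Module.End.mul_apply, Module.End.mul_apply, ih (lapE s p), pderiv_lapE]

lemma pd2_Tm (i : Fin d) (p : MvP d) : pderiv i (pderiv i (Tm i p)) = p := by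
  rw [Tm_apply, pderiv_ad, pderiv_ad]

/-- the telescoping solution of `∂ᵢ²u + (∑_{j∈s} ∂ⱼ²) u = f` -/
noncomputable def solveN (i : Fin d) (s : Finset (Fin d)) (N : ℕ) (f : MvP d) : MvP d :=
  ∑ j ∈ Finset.range (N + 1), ((-1 : ℝ) ^ j) • ((Tm i ^ (j + 1)) ((lapE s ^ j) f))

@[simp] lemma solveN_zero (i : Fin d) (s : Finset (Fin d)) (N : ℕ) :
    solveN i s N 0 = 0 := by simp [solveN]

lemma lapE_of_deg_le_one {s : Finset (Fin d)} {f : MvP d} (h : f.totalDegree ≤ 1) :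
    lapE s f = 0 := by
  rw [lapE_apply]
  refine Finset.sum_eq_zero fun j _ => ?_
  have : (pderiv j f).totalDegree = 0 := by
    have := totalDegree_pderiv_le j f; omega
  rw [pderiv_totalDegree_zero this j]

lemma deg_ge_of_lapE_pow_ne (s : Finset (Fin d)) :
    ∀ (j : ℕ) (f : MvP d), (lapE s ^ j) f ≠ 0 → 2 * j ≤ f.totalDegree := by
  intro j
  induction j with
  | zero => intro f _; omega
  | succ n ih =>
    intro f hf
    rw [pow_succ, Module.End.mul_apply] at hf
    have h1 : 2 * n ≤ (lapE s f).totalDegree := ih _ hf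
    have h2 : lapE s f ≠ 0 := by
      intro h0; rw [h0, map_zero] at hf
      exact hf rfl
    have h3 : 2 ≤ f.totalDegree := by
      by_contra hc
      exact h2 (lapE_of_deg_le_one (by omega))
    have h4 := totalDegree_lapE_le s f
    omega

lemma solveN_deg (i : Fin d) (s : Finset (Fin d)) (N : ℕ) (f : MvP d) :
    (solveN i s N f).totalDegree ≤ f.totalDegree + 2 := by
  refine (totalDegree_finset_sum _ _).trans (Finset.sup_le fun j _ => ?_)
  by_cases hz : (lapE s ^ j) f = 0
  · simp [hz]
  refine (totalDegree_smul_le _ _).trans ?_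
  have h1 := totalDegree_Tm_pow_le i (j + 1) ((lapE s ^ j) f)
  have h2 := totalDegree_lapE_pow_le s j f
  have h3 := deg_ge_of_lapE_pow_ne s j f hz
  omega

lemma solveN_pderiv {v i : Fin d} (hvi : v ≠ i) (s : Finset (Fin d)) (N : ℕ) (f : MvP d) :
    pderiv v (solveN i s N f) = solveN i s N (pderiv v f) := by
  rw [solveN, solveN, map_sum]
  refine Finset.sum_congr rfl fun j _ => ?_
  rw [Derivation.map_smul, pderiv_Tm_pow hvi, pderiv_lapE_pow]

lemma solveN_eqn {i : Fin d} {s : Finset (Fin d)} (h : i ∉ s) {N : ℕ} {f : MvP d}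
    (hN : (lapE s ^ (N + 1)) f = 0) :
    pderiv i (pderiv i (solveN i s N f)) + lapE s (solveN i s N f) = f := by
  have key : ∀ j : ℕ,
      pderiv i (pderiv i (((-1 : ℝ) ^ j) • ((Tm i ^ (j + 1)) ((lapE s ^ j) f))))
        + lapE s (((-1 : ℝ) ^ j) • ((Tm i ^ (j + 1)) ((lapE s ^ j) f)))
      = ((-1 : ℝ) ^ j) • ((Tm i ^ j) ((lapE s ^ j) f))
        - ((-1 : ℝ) ^ (j + 1)) • ((Tm i ^ (j + 1)) ((lapE s ^ (j + 1)) f)) := by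
    intro j
    have e1 : pderiv i (pderiv i ((Tm i ^ (j + 1)) ((lapE s ^ j) f)))
        = (Tm i ^ j) ((lapE s ^ j) f) := by
      rw [pow_succ', Module.End.mul_apply, pd2_Tm]
    have e2 : lapE s ((Tm i ^ (j + 1)) ((lapE s ^ j) f))
        = (Tm i ^ (j + 1)) ((lapE s ^ (j + 1)) f) := by
      rw [lapE_Tm_pow h]
      congr 1
      rw [pow_succ', Module.End.mul_apply]
    rw [Derivation.map_smul, Derivation.map_smul, map_smul, e1, e2, pow_succ]
    module
  rw [solveN, map_sum, map_sum, map_sum, ← Finset.sum_add_distrib]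
  rw [Finset.sum_congr rfl fun j _ => key j, Finset.sum_range_sub']
  rw [hN]
  simp


lemma lap_eq_lapE (p : MvP d) : lap p = lapE Finset.univ p := by
  rw [lapE_apply, _root_.lap]

lemma lap_zero : lap (0 : MvP d) = 0 := by simp [lap_eq_lapE]

lemma lap_add (p q : MvP d) : lap (p + q) = lap p + lap q := by
  simp [lap_eq_lapE]

lemma lap_sub (p q : MvP d) : lap (p - q) = lap p - lap q := by
  simp [lap_eq_lapE]

lemma lap_neg (p : MvP d) : lap (-p) = -lap p := by
  simp [lap_eq_lapE]

lemma lap_sum {α : Type*} (t : Finset α) (h : α → MvP d) :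
    lap (∑ x ∈ t, h x) = ∑ x ∈ t, lap (h x) := by
  simp [lap_eq_lapE]

lemma pderiv_lap (v : Fin d) (p : MvP d) :
    pderiv v (lap p) = lap (pderiv v p) := by
  rw [lap_eq_lapE, lap_eq_lapE, pderiv_lapE]

lemma totalDegree_lap_le (p : MvP d) : (lap p).totalDegree ≤ p.totalDegree - 2 := by
  rw [lap_eq_lapE]; exact totalDegree_lapE_le _ p

lemma lap_split (i : Fin d) (u : MvP d) :
    lap u = pderiv i (pderiv i u) + lapE (Finset.univ.erase i) u := by
  rw [lap_eq_lapE, lapE_apply, lapE_apply,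
    ← Finset.add_sum_erase _ _ (Finset.mem_univ i)]

lemma lap_split2 {i0 i1 : Fin d} (h : i0 ≠ i1) (u : MvP d) :
    lap u = pderiv i0 (pderiv i0 u)
      + (pderiv i1 (pderiv i1 u) + lapE ((Finset.univ.erase i0).erase i1) u) := by
  rw [lap_split i0, lapE_apply, lapE_apply,
    ← Finset.add_sum_erase _ _ (Finset.mem_erase.mpr ⟨h.symm, Finset.mem_univ i1⟩)]

lemma exists_lap (hd : 0 < d) (n : ℕ) (f : MvP d) (hf : f.totalDegree ≤ n) :
    ∃ u : MvP d, lap u = f ∧ u.totalDegree ≤ n + 2 := by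
  set i : Fin d := ⟨0, hd⟩
  set s := Finset.univ.erase i with hs
  refine ⟨solveN i s f.totalDegree f, ?_, (solveN_deg _ _ _ _).trans (by omega)⟩
  rw [lap_split i]
  exact solveN_eqn (Finset.notMem_erase i _) (lapE_nilpotent s _ f le_rfl)

lemma exists_harmonic {i0 i1 : Fin d} (hne : i0 ≠ i1) (n : ℕ) (r : MvP d)
    (hr : lap r = 0) (hdeg : r.totalDegree ≤ n) :
    ∃ a : MvP d, lap a = 0 ∧ pderiv i0 a = r ∧ a.totalDegree ≤ n + 1 := by
  set a0 : MvP d := ad i0 r with ha0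
  have ha0d : a0.totalDegree ≤ n + 1 := (totalDegree_ad_le i0 r).trans (by omega)
  have ha0p : pderiv i0 a0 = r := pderiv_ad i0 r
  set S : MvP d := lap a0 with hS
  have hS0 : pderiv i0 S = 0 := by rw [hS, pderiv_lap, ha0p, hr]
  have hSdeg : S.totalDegree ≤ n - 1 := by
    have := totalDegree_lap_le a0
    rw [← hS] at this
    omega
  set s' := (Finset.univ.erase i0).erase i1 with hs'
  set b : MvP d := solveN i1 s' S.totalDegree S with hb
  have hi1s' : i1 ∉ s' := Finset.notMem_erase i1 _
  have hb1 : pderiv i1 (pderiv i1 b) + lapE s' b = S :=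
    solveN_eqn hi1s' (lapE_nilpotent s' _ S le_rfl)
  have hb0 : pderiv i0 b = 0 := by
    rw [hb, solveN_pderiv hne, hS0, solveN_zero]
  have hlapb : lap b = S := by
    rw [lap_split2 hne, hb0]
    simp only [map_zero, zero_add]
    exact hb1
  refine ⟨a0 - b, ?_, ?_, ?_⟩
  · rw [lap_sub, hlapb, ← hS, sub_self]
  · rw [map_sub, ha0p, hb0, sub_zero]
  · have hbd : b.totalDegree ≤ n + 1 := by
      rcases eq_or_ne S 0 with hSz | hSz
      · have hb0' : b = 0 := by rw [hb, hSz, solveN_zero]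
        simp [hb0']
      · have h2 : 2 ≤ a0.totalDegree := by
          by_contra hc
          refine hSz (hS.trans ?_)
          rw [lap_eq_lapE]
          exact lapE_of_deg_le_one (by omega)
        have hn : 1 ≤ n := by omega
        have := solveN_deg i1 s' S.totalDegree S
        rw [← hb] at this
        refine this.trans ((Nat.add_le_add_right hSdeg 2).trans ?_)
        omega
    calc (a0 - b).totalDegree ≤ max a0.totalDegree (-b).totalDegree := by
          rw [sub_eq_add_neg]; exact totalDegree_add _ _
      _ ≤ n + 1 := by
          rw [totalDegree_neg]
          exact max_le ha0d hbd

end StokesAux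

open StokesAux in
/-- For `d ∈ {2, 3}` and `k ≥ 2`:
`{−Δu + ∇p : u ∈ [𝒫ᵏ(ℝᵈ)]ᵈ, div u = 0, p ∈ 𝒫^{k-1}(ℝᵈ)} = [𝒫^{k-2}(ℝᵈ)]ᵈ`. -/
theorem stokes_momentum_range_eq (d k : ℕ) (hd : d = 2 ∨ d = 3) (hk : 2 ≤ k) :
    {f : Fin d → MvPolynomial (Fin d) ℝ |
        ∃ (u : Fin d → MvPolynomial (Fin d) ℝ) (p : MvPolynomial (Fin d) ℝ),
          (∀ i, (u i).totalDegree ≤ k) ∧ pdiv u = 0 ∧ p.totalDegree ≤ k - 1 ∧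
          f = fun i => -lap (u i) + pderiv i p} =
      {f : Fin d → MvPolynomial (Fin d) ℝ | ∀ i, (f i).totalDegree ≤ k - 2} := by
  have hd2 : 2 ≤ d := by omega
  ext f
  simp only [Set.mem_setOf_eq]
  constructor
  · rintro ⟨u, p, hu, -, hp, rfl⟩ i
    have h1 : (lap (u i)).totalDegree ≤ k - 2 := by
      refine (totalDegree_lap_le (u i)).trans ?_
      have := hu i; omega
    have h2 : (pderiv i p).totalDegree ≤ k - 2 := by
      refine (totalDegree_pderiv_le i p).trans ?_
      omega
    calc (-lap (u i) + pderiv i p).totalDegree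
        ≤ max (-lap (u i)).totalDegree (pderiv i p).totalDegree := totalDegree_add _ _
      _ ≤ k - 2 := by rw [totalDegree_neg]; exact max_le h1 h2
  · intro hf
    set i0 : Fin d := ⟨0, by omega⟩ with hi0
    set i1 : Fin d := ⟨1, by omega⟩ with hi1
    have hne : i0 ≠ i1 := by
      intro h
      have := congrArg Fin.val h
      simp [hi0, hi1] at this
    -- Step A : a pressure-like potential `q` with `Δq = div f`
    obtain ⟨q, hq_eq, hq_deg⟩ :
        ∃ q : MvPolynomial (Fin d) ℝ, lap q = pdiv f ∧ q.totalDegree ≤ k - 1 := by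
      rcases Nat.lt_or_ge k 3 with hk3 | hk3
      · refine ⟨0, ?_, by simp⟩
        have hdf : pdiv f = 0 := by
          rw [pdiv]
          refine Finset.sum_eq_zero fun i _ => ?_
          refine pderiv_totalDegree_zero ?_ i
          have := hf i; omega
        rw [hdf, lap_zero]
      · have hdf : (pdiv f).totalDegree ≤ k - 3 := by
          rw [pdiv]
          refine (totalDegree_finset_sum _ _).trans (Finset.sup_le fun i _ => ?_)
          refine (totalDegree_pderiv_le i (f i)).trans ?_
          have := hf i; omega
        obtain ⟨q, h1, h2⟩ := exists_lap (by omega) (k - 3) (pdiv f) hdf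
        exact ⟨q, h1, h2.trans (by omega)⟩
    -- Step A' : the divergence-free part `g` of `f`
    set g : Fin d → MvPolynomial (Fin d) ℝ := fun i => f i - pderiv i q with hg
    have hgdeg : ∀ i, (g i).totalDegree ≤ k - 2 := by
      intro i
      refine (totalDegree_sub _ _).trans (max_le (hf i) ?_)
      refine (totalDegree_pderiv_le i q).trans ?_
      omega
    have hgdiv : pdiv g = 0 := by
      rw [pdiv]
      have hterm : ∀ i : Fin d, pderiv i (g i) = pderiv i (f i) - pderiv i (pderiv i q) :=
        fun i => map_sub _ _ _
      rw [Finset.sum_congr rfl fun i _ => hterm i, Finset.sum_sub_distrib, ← pdiv, ← lap,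
        hq_eq, sub_self]
    -- Step B : componentwise Laplace preimages
    have hv : ∀ i : Fin d, ∃ vi : MvPolynomial (Fin d) ℝ,
        lap vi = -(g i) ∧ vi.totalDegree ≤ k := by
      intro i
      obtain ⟨vi, h1, h2⟩ := exists_lap (show 0 < d by omega) (k - 2) (-(g i))
        (by rw [totalDegree_neg]; exact hgdeg i)
      exact ⟨vi, h1, h2.trans (by omega)⟩
    choose v hv1 hv2 using hv
    set r : MvPolynomial (Fin d) ℝ := pdiv v with hr
    have hrdeg : r.totalDegree ≤ k - 1 := by
      rw [hr, pdiv]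
      refine (totalDegree_finset_sum _ _).trans (Finset.sup_le fun i _ => ?_)
      refine (totalDegree_pderiv_le i (v i)).trans ?_
      have := hv2 i; omega
    have hrlap : lap r = 0 := by
      rw [hr, pdiv, lap_sum]
      have hterm : ∀ i : Fin d, lap (pderiv i (v i)) = pderiv i (-(g i)) := fun i => by
        rw [← pderiv_lap, hv1 i]
      rw [Finset.sum_congr rfl fun i _ => hterm i]
      simp only [map_neg]
      rw [Finset.sum_neg_distrib, ← pdiv, hgdiv, neg_zero]
    -- Step C : a harmonic correction
    obtain ⟨a, halap, hapd, hadeg⟩ := exists_harmonic hne (k - 1) (-r)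
      (by rw [lap_neg, hrlap, neg_zero]) (by rw [totalDegree_neg]; exact hrdeg)
    -- assembling the velocity field
    refine ⟨fun i => v i + if i = i0 then a else 0, q, ?_, ?_, hq_deg, ?_⟩
    · intro i
      refine (totalDegree_add _ _).trans (max_le (hv2 i) ?_)
      split_ifs
      · exact hadeg.trans (by omega)
      · simp
    · rw [pdiv]
      have hterm : ∀ i : Fin d, pderiv i (v i + if i = i0 then a else 0)
          = pderiv i (v i) + if i = i0 then pderiv i0 a else 0 := by
        intro i
        rw [map_add]
        congr 1
        split_ifs with h
        · rw [h]
        · exact map_zero _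
      rw [Finset.sum_congr rfl fun i _ => hterm i, Finset.sum_add_distrib, ← pdiv, ← hr,
        Finset.sum_ite_eq' Finset.univ i0 fun _ => pderiv i0 a]
      simp only [Finset.mem_univ, if_true]
      rw [hapd, add_neg_cancel]
    · funext i
      have hlapu : lap (v i + if i = i0 then a else 0) = -(g i) := by
        rw [lap_add, hv1 i]
        have : lap (if i = i0 then a else 0) = 0 := by
          split_ifs
          · exact halap
          · exact lap_zero
        rw [this, add_zero]
      rw [hlapu, neg_neg, hg]
      simp
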